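/- arXiv:1403.4564 — 5 statements merged into one kernel-verified Lean document; each statement's English description precedes it below -/
import Mathlib

section
/- Let $V$ be the generator of a strongly continuous one-parameter group $e^{tV}$ of isometries on a Banach space $E$. Then for every $f \in \mathrm{Dom}(V^m)$, every integer $1 \le l < m$, and all $a, r > 0$, the interpolation inequality $r^l \|V^l f\| \le a^{m-l} r^m \|V^m f\| + c_m a^{-l} \|f\|$ holds, where $c_m$ is a constant depending only on $m$. -/
open Finset Nat

lemma vand_coeffs (m : ℕ) (l : Fin m) :
    ∃ b : Fin m → ℝ, ∀ j : Fin m, ∑ k, b k * (k : ℝ) ^ (j : ℕ) = if j = l then 1 else 0 := by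
  set W : Matrix (Fin m) (Fin m) ℝ := Matrix.vandermonde (fun k : Fin m => (k : ℝ)) with hW
  have hdet : IsUnit W.det := by
    rw [isUnit_iff_ne_zero, hW, Matrix.det_vandermonde_ne_zero_iff]
    intro i j hij
    have : ((i : ℕ) : ℝ) = ((j : ℕ) : ℝ) := hij
    exact Fin.val_injective (by exact_mod_cast this)
  refine ⟨fun k => W⁻¹ l k, fun j => ?_⟩
  have h1 : (W⁻¹ * W) l j = if l = j then 1 else 0 := by
    rw [Matrix.nonsing_inv_mul W hdet, Matrix.one_apply]
  rw [Matrix.mul_apply] at h1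
  simp only [hW, Matrix.vandermonde_apply] at h1
  rw [h1]
  simp [eq_comm]

lemma deriv_all {E : Type} [NormedAddCommGroup E] [NormedSpace ℂ E]
    (U : ℝ → E →L[ℂ] E) (V : E →ₗ[ℂ] E)
    (hadd : ∀ s t : ℝ, U (s + t) = (U s).comp (U t))
    (hderiv : ∀ x : E, HasDerivAt (fun t : ℝ => U t x) (V x) 0)
    (t : ℝ) (x : E) : HasDerivAt (fun s : ℝ => U s x) (U t (V x)) t := by
  have hinner : HasDerivAt (fun s : ℝ => s - t) (1:ℝ) t := by
    simpa using (hasDerivAt_id t).sub_const t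
  have h0 : (fun s : ℝ => s - t) t = 0 := by simp
  have h1 : HasDerivAt (fun s : ℝ => U (s - t) x) ((1:ℝ) • V x) t := by
    exact HasDerivAt.scomp t (h0 ▸ hderiv x) hinner
  rw [one_smul] at h1
  have h2 : HasDerivAt (fun s : ℝ => U t (U (s - t) x)) (U t (V x)) t := by
    have := (((U t).restrictScalars ℝ).hasFDerivAt (x := U ((t:ℝ) - t) x)).comp_hasDerivAt t h1
    exact this
  convert h2 using 1
  funext s
  have := hadd t (s - t)
  rw [show t + (s - t) = s by ring] at this
  rw [this]; rfl

open Finset Nat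

lemma taylor_bound {E : Type} [NormedAddCommGroup E] [NormedSpace ℂ E] [CompleteSpace E]
    (U : ℝ → E →L[ℂ] E) (V : E →ₗ[ℂ] E)
    (hone : U 0 = 1)
    (hadd : ∀ s t : ℝ, U (s + t) = (U s).comp (U t))
    (hiso : ∀ (t : ℝ) (x : E), ‖U t x‖ = ‖x‖)
    (hcont : ∀ x : E, Continuous fun t : ℝ => U t x)
    (hderiv : ∀ x : E, HasDerivAt (fun t : ℝ => U t x) (V x) 0) :
    ∀ (n : ℕ) (x : E) (T : ℝ), 0 ≤ T →
      ‖U T x - ∑ j ∈ Finset.range n, (T ^ j / (j ! : ℝ)) • (V ^ j) x‖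
        ≤ T ^ n / (n ! : ℝ) * ‖(V ^ n) x‖ := by
  have hD : ∀ (t : ℝ) (x : E), HasDerivAt (fun s : ℝ => U s x) (U t (V x)) t :=
    deriv_all U V hadd hderiv
  intro n
  induction n with
  | zero => intro x T _; simpa using (hiso T x).le
  | succ n IH =>
    intro x T hT
    set Q : ℝ → E := fun t => ∑ j ∈ Finset.range (n + 1), (t ^ j / (j ! : ℝ)) • (V ^ j) x with hQ
    set G : ℝ → E := fun s => U s (V x) - ∑ j ∈ Finset.range n, (s ^ j / (j ! : ℝ)) • (V ^ j) (V x)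
      with hG
    have hQd : ∀ t : ℝ, HasDerivAt Q (∑ j ∈ Finset.range n, (t ^ j / (j ! : ℝ)) • (V ^ j) (V x)) t := by
      intro t
      have hterm : ∀ j : ℕ, HasDerivAt (fun t : ℝ => (t ^ j / (j ! : ℝ)) • (V ^ j) x)
          (((j : ℝ) * t ^ (j - 1) / (j ! : ℝ)) • (V ^ j) x) t := fun j =>
        (((hasDerivAt_pow j t).div_const (j ! : ℝ)).smul_const ((V ^ j) x))
      have hsum := HasDerivAt.fun_sum (fun j (_ : j ∈ Finset.range (n + 1)) => hterm j)
      convert hsum using 1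
      rw [Finset.sum_range_succ']
      simp only [Nat.cast_zero, zero_mul, zero_div, zero_smul, add_zero]
      refine Finset.sum_congr rfl fun j _ => ?_
      have h1 : ((j + 1 : ℕ) : ℝ) * t ^ (j + 1 - 1) / ((j + 1)! : ℝ) = t ^ j / (j ! : ℝ) := by
        rw [Nat.factorial_succ]
        push_cast
        rw [mul_div_mul_left _ _ (by positivity : ((j:ℝ) + 1) ≠ 0)]
      rw [← h1, pow_succ, Module.End.mul_apply]
    have hg : ∀ t : ℝ, HasDerivAt (fun s => U s x - Q s) (G t) t := fun t =>
      (hD t x).sub (hQd t)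
    have hGcont : Continuous G := by
      apply (hcont (V x)).sub
      exact continuous_finset_sum _ fun j _ =>
        ((continuous_pow j).div_const _).smul continuous_const
    have hQ0 : Q 0 = x := by
      simp only [hQ]
      rw [Finset.sum_eq_single 0]
      · simp
      · intro j _ hj; simp [zero_pow hj]
      · simp
    have hftc : ∫ s in (0:ℝ)..T, G s = (U T x - Q T) - (U 0 x - Q 0) :=
      intervalIntegral.integral_eq_sub_of_hasDerivAt (fun t _ => hg t)
        (hGcont.intervalIntegrable 0 T)
    have hval : U T x - Q T = ∫ s in (0:ℝ)..T, G s := by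
      rw [hftc, hone, hQ0]; simp
    rw [hQ] at hval
    rw [hval]
    calc ‖∫ s in (0:ℝ)..T, G s‖ ≤ ∫ s in (0:ℝ)..T, ‖G s‖ :=
          intervalIntegral.norm_integral_le_integral_norm hT
      _ ≤ ∫ s in (0:ℝ)..T, s ^ n / (n ! : ℝ) * ‖(V ^ (n+1)) x‖ := by
          apply intervalIntegral.integral_mono_on hT
            (hGcont.norm.intervalIntegrable 0 T)
            ((((continuous_pow n).div_const _).mul continuous_const).intervalIntegrable 0 T)
          intro s hs
          have := IH (V x) s hs.1
          rw [hG]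
          simpa [← Module.End.mul_apply, ← pow_succ] using this
      _ ≤ T ^ (n+1) / ((n+1)! : ℝ) * ‖(V ^ (n+1)) x‖ := by
          have : ∀ s : ℝ, s ^ n / (n ! : ℝ) * ‖(V ^ (n+1)) x‖
              = (‖(V ^ (n+1)) x‖ / (n ! : ℝ)) * s ^ n := fun s => by ring
          simp_rw [this]
          rw [intervalIntegral.integral_const_mul, integral_pow]
          have h1 : (n ! : ℝ) ≠ 0 := Nat.cast_ne_zero.mpr (Nat.factorial_ne_zero n)
          have h2 : ((n:ℝ) + 1) ≠ 0 := by positivity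
          apply le_of_eq
          rw [Nat.factorial_succ]
          push_cast
          field_simp
          ring
lemma core_est (m : ℕ) {E : Type} [NormedAddCommGroup E] [NormedSpace ℂ E] [CompleteSpace E]
    (U : ℝ → E →L[ℂ] E) (V : E →ₗ[ℂ] E)
    (hone : U 0 = 1)
    (hadd : ∀ s t : ℝ, U (s + t) = (U s).comp (U t))
    (hiso : ∀ (t : ℝ) (x : E), ‖U t x‖ = ‖x‖)
    (hcont : ∀ x : E, Continuous fun t : ℝ => U t x)
    (hderiv : ∀ x : E, HasDerivAt (fun t : ℝ => U t x) (V x) 0)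
    (b : Fin m → ℝ) (l : Fin m)
    (hb : ∀ j : Fin m, ∑ k, b k * (k : ℝ) ^ (j : ℕ) = if j = l then 1 else 0)
    (f : E) (h : ℝ) (hh : 0 < h) :
    h ^ (l : ℕ) / (((l : ℕ))! : ℝ) * ‖(V ^ (l : ℕ)) f‖
      ≤ (∑ k, |b k|) * ‖f‖ + (∑ k, |b k|) * (m : ℝ) ^ m * h ^ m / (m ! : ℝ) * ‖(V ^ m) f‖ := by
  set P : ℝ → E := fun t => ∑ j ∈ Finset.range m, (t ^ j / (j ! : ℝ)) • (V ^ j) f with hP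
  set R : ℝ → E := fun t => U t f - P t with hR'
  have hR : ∀ k : Fin m, ‖R ((k : ℝ) * h)‖ ≤ ((k : ℝ) * h) ^ m / (m ! : ℝ) * ‖(V ^ m) f‖ := by
    intro k
    exact taylor_bound U V hone hadd hiso hcont hderiv m f ((k : ℝ) * h)
      (by positivity)
  have key : ∑ k : Fin m, b k • P ((k : ℝ) * h)
      = (h ^ (l : ℕ) / (((l : ℕ))! : ℝ)) • (V ^ (l : ℕ)) f := by
    calc ∑ k : Fin m, b k • P ((k : ℝ) * h)
        = ∑ k : Fin m, ∑ j ∈ Finset.range m,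
            (b k * (k : ℝ) ^ j) • ((h ^ j / (j ! : ℝ)) • (V ^ j) f) := by
          refine Finset.sum_congr rfl fun k _ => ?_
          rw [hP, Finset.smul_sum]
          refine Finset.sum_congr rfl fun j _ => ?_
          rw [smul_smul, smul_smul]
          congr 1
          rw [mul_pow]
          ring
      _ = ∑ j ∈ Finset.range m, (∑ k : Fin m, b k * (k : ℝ) ^ j)
            • ((h ^ j / (j ! : ℝ)) • (V ^ j) f) := by
          rw [Finset.sum_comm]
          exact Finset.sum_congr rfl fun j _ => (Finset.sum_smul).symm
      _ = ∑ j : Fin m, (∑ k : Fin m, b k * (k : ℝ) ^ (j : ℕ))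
            • ((h ^ (j : ℕ) / (((j : ℕ))! : ℝ)) • (V ^ (j : ℕ)) f) :=
          (Fin.sum_univ_eq_sum_range _ m).symm
      _ = ∑ j : Fin m, if j = l then (h ^ (j : ℕ) / (((j : ℕ))! : ℝ)) • (V ^ (j : ℕ)) f else 0 := by
          refine Finset.sum_congr rfl fun j _ => ?_
          rw [hb j, ite_smul, one_smul, zero_smul]
      _ = (h ^ (l : ℕ) / (((l : ℕ))! : ℝ)) • (V ^ (l : ℕ)) f := by
          rw [Finset.sum_ite_eq' Finset.univ l]
          simp
  have key2 : (h ^ (l : ℕ) / (((l : ℕ))! : ℝ)) • (V ^ (l : ℕ)) f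
      = (∑ k : Fin m, b k • U ((k : ℝ) * h) f) - ∑ k : Fin m, b k • R ((k : ℝ) * h) := by
    rw [← key, ← Finset.sum_sub_distrib]
    refine Finset.sum_congr rfl fun k _ => ?_
    rw [← smul_sub]
    congr 1
    simp only [hR', hP]
    abel
  have hnorm : h ^ (l : ℕ) / (((l : ℕ))! : ℝ) * ‖(V ^ (l : ℕ)) f‖
      = ‖(h ^ (l : ℕ) / (((l : ℕ))! : ℝ)) • (V ^ (l : ℕ)) f‖ := by
    rw [norm_smul, Real.norm_eq_abs, abs_of_nonneg (by positivity)]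
  rw [hnorm, key2]
  calc ‖(∑ k : Fin m, b k • U ((k : ℝ) * h) f) - ∑ k : Fin m, b k • R ((k : ℝ) * h)‖
      ≤ ‖∑ k : Fin m, b k • U ((k : ℝ) * h) f‖ + ‖∑ k : Fin m, b k • R ((k : ℝ) * h)‖ :=
        norm_sub_le _ _
    _ ≤ (∑ k : Fin m, |b k|) * ‖f‖
        + (∑ k : Fin m, |b k|) * (m : ℝ) ^ m * h ^ m / (m ! : ℝ) * ‖(V ^ m) f‖ := by
        gcongr ?_ + ?_
        · calc ‖∑ k : Fin m, b k • U ((k : ℝ) * h) f‖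
              ≤ ∑ k : Fin m, ‖b k • U ((k : ℝ) * h) f‖ := norm_sum_le _ _
            _ = ∑ k : Fin m, |b k| * ‖f‖ := by
                refine Finset.sum_congr rfl fun k _ => ?_
                rw [norm_smul, Real.norm_eq_abs, hiso]
            _ = (∑ k : Fin m, |b k|) * ‖f‖ := by rw [Finset.sum_mul]
        · calc ‖∑ k : Fin m, b k • R ((k : ℝ) * h)‖
              ≤ ∑ k : Fin m, ‖b k • R ((k : ℝ) * h)‖ := norm_sum_le _ _
            _ ≤ ∑ k : Fin m, |b k| * (((m : ℝ)) ^ m * h ^ m / (m ! : ℝ) * ‖(V ^ m) f‖) := by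
                refine Finset.sum_le_sum fun k _ => ?_
                rw [norm_smul, Real.norm_eq_abs]
                refine mul_le_mul_of_nonneg_left ?_ (abs_nonneg _)
                refine le_trans (hR k) ?_
                rw [mul_pow]
                gcongr
                exact_mod_cast k.2.le
            _ = (∑ k : Fin m, |b k|) * (m : ℝ) ^ m * h ^ m / (m ! : ℝ) * ‖(V ^ m) f‖ := by
                rw [← Finset.sum_mul]
                ring
/-- Landau–Kolmogorov-type interpolation inequality: if `V` generates a strongly
continuous one-parameter group `e^{tV}` of isometries on a Banach space `E`, then for
`f ∈ Dom(V^m)`, `1 ≤ l < m`, and `a, r > 0`,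
`r^l ‖V^l f‖ ≤ a^(m-l) r^m ‖V^m f‖ + c_m a^(-l) ‖f‖`, with `c_m` depending only on `m`. -/
theorem interpolation_inequality (m : ℕ) (hm : 1 ≤ m) :
    ∃ c : ℝ, 0 < c ∧
      ∀ (E : Type) (_ : NormedAddCommGroup E), ∀ (_ : NormedSpace ℂ E) (_ : CompleteSpace E),
      ∀ (U : ℝ → E →L[ℂ] E) (V : E →ₗ[ℂ] E),
        U 0 = 1 →
        (∀ s t : ℝ, U (s + t) = (U s).comp (U t)) →
        (∀ (t : ℝ) (x : E), ‖U t x‖ = ‖x‖) →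
        (∀ x : E, Continuous fun t : ℝ => U t x) →
        (∀ x : E, HasDerivAt (fun t : ℝ => U t x) (V x) 0) →
        ∀ (f : E) (l : ℕ), 1 ≤ l → l < m → ∀ a r : ℝ, 0 < a → 0 < r →
          r ^ l * ‖(V ^ l) f‖ ≤ a ^ (m - l) * r ^ m * ‖(V ^ m) f‖ + c * a ^ (-(l : ℤ)) * ‖f‖ := by
  choose b hb using vand_coeffs m
  obtain ⟨S, hS⟩ : ∃ S : ℝ, S = ∑ l : Fin m, ∑ k : Fin m, |b l k| := ⟨_, rfl⟩
  obtain ⟨C, hC⟩ : ∃ C : ℝ, C = max S 1 := ⟨_, rfl⟩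
  have hC1 : 1 ≤ C := hC ▸ le_max_right _ _
  have hfm1 : (1:ℝ) ≤ (m ! : ℝ) := by exact_mod_cast Nat.one_le_iff_ne_zero.mpr (Nat.factorial_ne_zero m)
  have hmm1 : (1:ℝ) ≤ (m : ℝ) ^ m := one_le_pow₀ (by exact_mod_cast hm)
  obtain ⟨D, hD⟩ : ∃ D : ℝ, D = (m ! : ℝ) * C * (m : ℝ) ^ m := ⟨_, rfl⟩
  have hD1 : 1 ≤ D := by
    rw [hD]
    calc (1:ℝ) = 1 * 1 * 1 := by ring
      _ ≤ (m ! : ℝ) * C * (m : ℝ) ^ m := by gcongr <;> linarith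
  have hD0 : (0:ℝ) < D := lt_of_lt_of_le one_pos hD1
  refine ⟨D ^ m, by positivity, ?_⟩
  intro E _ _ _ U V hone hadd hiso hcont hderiv f l hl1 hlm a r ha hr
  obtain ⟨d, hd1, hd2⟩ : ∃ d, m = l + d ∧ 1 ≤ d := ⟨m - l, by omega, by omega⟩
  set lf : Fin m := ⟨l, hlm⟩ with hlf
  have hlfl : (lf : ℕ) = l := rfl
  obtain ⟨h, hh'⟩ : ∃ h : ℝ, h = a * r / D := ⟨_, rfl⟩
  have hC0 : (0:ℝ) ≤ C := le_trans zero_le_one hC1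
  have hh : 0 < h := by rw [hh']; positivity
  have core := core_est m U V hone hadd hiso hcont hderiv (b lf) lf (hb lf) f h hh
  obtain ⟨Sl, hSl'⟩ : ∃ Sl : ℝ, Sl = ∑ k : Fin m, |b lf k| := ⟨_, rfl⟩
  rw [hlfl, ← hSl'] at core
  have hSl0 : 0 ≤ Sl := hSl' ▸ Finset.sum_nonneg fun k _ => abs_nonneg _
  have hSl : Sl ≤ C := by
    rw [hC, hSl']
    refine le_trans ?_ (le_max_left S 1)
    rw [hS]
    exact Finset.single_le_sum (f := fun i => ∑ k : Fin m, |b i k|)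
      (fun i _ => Finset.sum_nonneg fun k _ => abs_nonneg _) (Finset.mem_univ lf)
  have hlfact : ((l)! : ℝ) ≤ (m ! : ℝ) := by exact_mod_cast Nat.factorial_le hlm.le
  have hlf0 : (0:ℝ) < ((l)! : ℝ) := by positivity
  have scalar1 : ((l)! : ℝ) * Sl ≤ D := by
    calc ((l)! : ℝ) * Sl ≤ (m ! : ℝ) * C := by gcongr
      _ ≤ D := by
          rw [hD]
          exact le_mul_of_one_le_right (mul_nonneg (by positivity) hC0) hmm1
  have key3 : ((l)! : ℝ) * (Sl * (m : ℝ) ^ m * h ^ m / (m ! : ℝ)) ≤ D * h ^ m := by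
    rw [show ((l)! : ℝ) * (Sl * (m : ℝ) ^ m * h ^ m / (m ! : ℝ))
        = ((l)! : ℝ) * (Sl * (m : ℝ) ^ m * h ^ m) / (m ! : ℝ) from by ring,
      div_le_iff₀ (by positivity : (0:ℝ) < (m ! : ℝ))]
    calc ((l)! : ℝ) * (Sl * (m : ℝ) ^ m * h ^ m) ≤ (m ! : ℝ) * (C * (m : ℝ) ^ m * h ^ m) := by
          gcongr
      _ = D * h ^ m := by rw [hD]; ring
      _ ≤ D * h ^ m * (m ! : ℝ) :=
          le_mul_of_one_le_right (mul_nonneg hD0.le (by positivity)) hfm1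
  have hstar : h ^ l * ‖(V ^ l) f‖ ≤ D * ‖f‖ + D * h ^ m * ‖(V ^ m) f‖ := by
    calc h ^ l * ‖(V ^ l) f‖ = ((l)! : ℝ) * (h ^ l / ((l)! : ℝ) * ‖(V ^ l) f‖) := by
          field_simp
      _ ≤ ((l)! : ℝ) * (Sl * ‖f‖ + Sl * (m : ℝ) ^ m * h ^ m / (m ! : ℝ) * ‖(V ^ m) f‖) :=
          mul_le_mul_of_nonneg_left core hlf0.le
      _ = ((l)! : ℝ) * Sl * ‖f‖ + ((l)! : ℝ) * (Sl * (m : ℝ) ^ m * h ^ m / (m ! : ℝ)) * ‖(V ^ m) f‖ := by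
          ring
      _ ≤ D * ‖f‖ + D * h ^ m * ‖(V ^ m) f‖ :=
          add_le_add (mul_le_mul_of_nonneg_right scalar1 (norm_nonneg f))
            (mul_le_mul_of_nonneg_right key3 (norm_nonneg _))
  -- now final algebra
  have hzp : a ^ (-(l : ℤ)) = ((a ^ l)⁻¹ : ℝ) := by
    rw [zpow_neg, zpow_natCast]
  rw [hzp, show m - l = d from by omega]
  have hrh : (D / a) * h = r := by
    rw [hh']; field_simp
  have T1 : (D / a) ^ l * D * ‖f‖ ≤ D ^ m * (a ^ l)⁻¹ * ‖f‖ := by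
    refine mul_le_mul_of_nonneg_right ?_ (norm_nonneg f)
    have s1 : (D / a) ^ l * D = D ^ (l + 1) * (a ^ l)⁻¹ := by
      rw [div_pow]
      field_simp
      ring
    rw [s1]
    gcongr
    omega
  have T2 : (D / a) ^ l * (D * h ^ m) * ‖(V ^ m) f‖ ≤ a ^ d * r ^ m * ‖(V ^ m) f‖ := by
    refine mul_le_mul_of_nonneg_right ?_ (norm_nonneg _)
    have s2 : (D / a) ^ l * (D * h ^ m) = (D ^ (l + 1) / D ^ m) * (a ^ d * r ^ m) := by
      rw [hh', hd1]
      have hDne : D ≠ 0 := hD0.ne'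
      have hane : a ≠ 0 := ha.ne'
      simp only [div_pow, mul_pow, pow_add, pow_one]
      field_simp
    rw [s2]
    have : D ^ (l + 1) / D ^ m ≤ 1 := by
      rw [div_le_one (pow_pos hD0 m)]
      exact pow_le_pow_right₀ hD1 (by omega)
    calc (D ^ (l + 1) / D ^ m) * (a ^ d * r ^ m) ≤ 1 * (a ^ d * r ^ m) :=
          mul_le_mul_of_nonneg_right this (by positivity)
      _ = a ^ d * r ^ m := one_mul _
  have hrl : (D / a) ^ l * h ^ l = r ^ l := by rw [← mul_pow, hrh]
  calc r ^ l * ‖(V ^ l) f‖ = (D / a) ^ l * (h ^ l * ‖(V ^ l) f‖) := by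
        rw [← hrl]; ring
    _ ≤ (D / a) ^ l * (D * ‖f‖ + D * h ^ m * ‖(V ^ m) f‖) :=
        mul_le_mul_of_nonneg_left hstar (pow_nonneg (div_nonneg hD0.le ha.le) l)
    _ = (D / a) ^ l * D * ‖f‖ + (D / a) ^ l * (D * h ^ m) * ‖(V ^ m) f‖ := by ring
    _ ≤ D ^ m * (a ^ l)⁻¹ * ‖f‖ + a ^ d * r ^ m * ‖(V ^ m) f‖ := add_le_add T1 T2
    _ = a ^ d * r ^ m * ‖(V ^ m) f‖ + D ^ m * (a ^ l)⁻¹ * ‖f‖ := by ring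
end

section
/- Let $A$ be a nonnegative self-adjoint operator on a Hilbert space $H$, with spectral measure $P$. A vector $f \in H$ satisfies $\|A^{s} f\| \le \Omega^{2s} \|f\|$ for all $s \in \mathbb{N}$ if and only if $f$ lies in the range of the spectral projection $P([0, \Omega^2])$. -/
open MeasureTheory

/-- `P` is the projection-valued spectral measure of the self-adjoint operator `A`:
each `P s` is an orthogonal projection, `P` is multiplicative and normalized, and for each
vector `f` the scalar measures `s ↦ ⟪P s f, f⟫` reproduce the moments `⟪Aⁿ f, f⟫`. -/
def IsSpectralMeasureOf {H : Type*} [NormedAddCommGroup H] [InnerProductSpace ℂ H]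
    [CompleteSpace H] (A : H →L[ℂ] H) (P : Set ℝ → H →L[ℂ] H) : Prop :=
  (∀ s, IsSelfAdjoint (P s)) ∧ (∀ s, IsIdempotentElem (P s)) ∧
  (∀ s t, (P s).comp (P t) = P (s ∩ t)) ∧ (P Set.univ = 1) ∧
  ∀ f : H, ∃ μ : Measure ℝ, IsFiniteMeasure μ ∧
    (∀ s : Set ℝ, MeasurableSet s → (μ s).toReal = (inner (𝕜 := ℂ) ((P s) f) f).re) ∧
    (∀ n : ℕ, (inner (𝕜 := ℂ) ((A ^ n) f) f).re = ∫ x, x ^ n ∂μ)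

section Aux

variable {H : Type*} [NormedAddCommGroup H] [InnerProductSpace ℂ H]

lemma sa_inner' {T : H →L[ℂ] H} [CompleteSpace H] (hT : IsSelfAdjoint T) (x y : H) :
    inner (𝕜 := ℂ) (T x) y = inner (𝕜 := ℂ) x (T y) :=
  (ContinuousLinearMap.isSelfAdjoint_iff_isSymmetric.mp hT) x y

lemma inner_self_re' (x : H) : (inner (𝕜 := ℂ) x x).re = ‖x‖ ^ 2 := by
  rw [inner_self_eq_norm_sq_to_K (𝕜 := ℂ)]
  norm_cast

lemma proj_re' {Q : H →L[ℂ] H} [CompleteSpace H] (hQ : IsSelfAdjoint Q)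
    (hQ2 : IsIdempotentElem Q) (x : H) :
    (inner (𝕜 := ℂ) (Q x) x).re = ‖Q x‖ ^ 2 := by
  have h1 : Q (Q x) = Q x := by
    conv_rhs => rw [← hQ2]
    rw [ContinuousLinearMap.mul_apply]
  calc (inner (𝕜 := ℂ) (Q x) x).re = (inner (𝕜 := ℂ) (Q (Q x)) x).re := by rw [h1]
    _ = (inner (𝕜 := ℂ) (Q x) (Q x)).re := by rw [sa_inner' hQ]
    _ = ‖Q x‖ ^ 2 := inner_self_re' _

lemma even_moment' {A : H →L[ℂ] H} [CompleteSpace H] (hA : IsSelfAdjoint A) (n : ℕ) (x : H) :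
    (inner (𝕜 := ℂ) ((A ^ (2 * n)) x) x).re = ‖(A ^ n) x‖ ^ 2 := by
  have h : (A ^ (2 * n)) x = (A ^ n) ((A ^ n) x) := by
    rw [two_mul, pow_add]; rfl
  rw [h, sa_inner' (hA.pow n)]
  exact inner_self_re' _

lemma pow_two_mul_nonneg (x : ℝ) (n : ℕ) : 0 ≤ x ^ (2 * n) := by
  rw [pow_mul]; exact pow_nonneg (sq_nonneg x) n

end Aux

/-- For a nonnegative self-adjoint operator `A` with spectral measure `P`, a vector `f`
satisfies the Bernstein inequalities `‖A^s f‖ ≤ Ω^{2s} ‖f‖` for all `s ∈ ℕ` if and only if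
`f` lies in the range of the spectral projection `P([0, Ω²])`. -/
theorem bernstein_iff_spectral_range {H : Type*} [NormedAddCommGroup H]
    [InnerProductSpace ℂ H] [CompleteSpace H]
    (A : H →L[ℂ] H) (P : Set ℝ → H →L[ℂ] H)
    (hA : IsSelfAdjoint A) (hpos : ∀ f : H, 0 ≤ (inner (𝕜 := ℂ) (A f) f).re)
    (hP : IsSpectralMeasureOf A P) (Ω : ℝ) (hΩ : 0 < Ω) (f : H) :
    (∀ s : ℕ, ‖(A ^ s) f‖ ≤ Ω ^ (2 * s) * ‖f‖) ↔
      f ∈ Set.range (P (Set.Icc 0 (Ω ^ 2))) := by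
  classical
  obtain ⟨hsa, hid, hmul, huniv, hmeas⟩ := hP
  choose μ hfin hμs hμm using hmeas
  haveI := hfin f
  set I : Set ℝ := Set.Icc 0 (Ω ^ 2) with hIdef
  have hImeas : MeasurableSet I := measurableSet_Icc
  -- basic consequences of the PVM axioms
  have hPP : ∀ (s t : Set ℝ) (x : H), P s (P t x) = P (s ∩ t) x := by
    intro s t x
    rw [← hmul s t]; rfl
  have hPempty : ∀ g : H, P ∅ g = 0 := by
    intro g
    have h0 : ((μ g) ∅).toReal = (inner (𝕜 := ℂ) (P ∅ g) g).re :=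
      hμs g ∅ MeasurableSet.empty
    rw [measure_empty, proj_re' (hsa ∅) (hid ∅) g] at h0
    simp only [ENNReal.toReal_zero] at h0
    exact norm_eq_zero.mp (pow_eq_zero_iff two_ne_zero |>.mp h0.symm)
  have hnormP : ∀ (s : Set ℝ) (g : H), ‖P s g‖ ≤ ‖g‖ := by
    intro s g
    have h1 : ‖P s g‖ ^ 2 = (inner (𝕜 := ℂ) (P s g) g).re :=
      (proj_re' (hsa s) (hid s) g).symm
    have h2 : (inner (𝕜 := ℂ) (P s g) g).re ≤ ‖P s g‖ * ‖g‖ := by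
      refine le_trans (Complex.re_le_norm _) ?_
      exact norm_inner_le_norm _ _
    nlinarith [norm_nonneg (P s g), norm_nonneg g]
  -- the measure of `P s f` is the restriction of the measure of `f`
  have hrestrict : ∀ s : Set ℝ, MeasurableSet s → μ (P s f) = (μ f).restrict s := by
    intro s hs
    haveI := hfin (P s f)
    apply Measure.ext
    intro t ht
    rw [Measure.restrict_apply ht]
    have e : inner (𝕜 := ℂ) (P t (P s f)) (P s f) = inner (𝕜 := ℂ) (P (t ∩ s) f) f := by
      have hss : s ∩ (t ∩ s) = t ∩ s := by
        ext x; simp only [Set.mem_inter_iff]; tauto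
      rw [hPP t s f, ← sa_inner' (hsa s), hPP s (t ∩ s) f, hss]
    have h1 := hμs (P s f) t ht
    have h2 := hμs f (t ∩ s) (ht.inter hs)
    rw [e, ← h2] at h1
    exact (ENNReal.toReal_eq_toReal_iff' (measure_ne_top _ _) (measure_ne_top _ _)).mp h1
  -- total mass
  have htotal : ∀ g : H, ((μ g) Set.univ).toReal = ‖g‖ ^ 2 := by
    intro g
    have := hμs g Set.univ MeasurableSet.univ
    rw [huniv, ContinuousLinearMap.one_apply, inner_self_re'] at this
    exact this
  -- even moments
  have hmom2 : ∀ (g : H) (n : ℕ), ‖(A ^ n) g‖ ^ 2 = ∫ x, x ^ (2 * n) ∂(μ g) := by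
    intro g n
    exact (even_moment' hA n g).symm.trans (hμm g (2 * n))
  -- integrability of all even moments
  have hbound : ∀ n M : ℕ, ∫⁻ x in Set.Icc (-(M : ℝ)) M, ENNReal.ofReal (x ^ (2 * n)) ∂(μ f)
      ≤ ENNReal.ofReal ((‖A ^ n‖ * ‖f‖) ^ 2) := by
    intro n M
    set s : Set ℝ := Set.Icc (-(M : ℝ)) M with hsdef
    have hsmeas : MeasurableSet s := measurableSet_Icc
    have hrs := hrestrict s hsmeas
    have hint1 : Integrable (fun x : ℝ => x ^ (2 * n)) ((μ f).restrict s) := by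
      refine ⟨(continuous_id.pow _).aestronglyMeasurable, ?_⟩
      apply HasFiniteIntegral.of_bounded (C := (M : ℝ) ^ (2 * n))
      filter_upwards [ae_restrict_mem hsmeas] with x hx
      rw [Real.norm_eq_abs, abs_pow]
      exact pow_le_pow_left₀ (abs_nonneg x) (abs_le.mpr ⟨hx.1, hx.2⟩) _
    have heq : ∫⁻ x in s, ENNReal.ofReal (x ^ (2 * n)) ∂(μ f)
        = ENNReal.ofReal (∫ x, x ^ (2 * n) ∂((μ f).restrict s)) := by
      rw [ofReal_integral_eq_lintegral_ofReal hint1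
        (Filter.Eventually.of_forall fun x => pow_two_mul_nonneg x n)]
    rw [heq, ← hrs]
    apply ENNReal.ofReal_le_ofReal
    rw [← hmom2 (P s f) n]
    have h1 : ‖(A ^ n) (P s f)‖ ≤ ‖A ^ n‖ * ‖f‖ :=
      le_trans ((A ^ n).le_opNorm _)
        (mul_le_mul_of_nonneg_left (hnormP s f) (norm_nonneg _))
    exact pow_le_pow_left₀ (norm_nonneg _) h1 2
  have hint : ∀ n : ℕ, Integrable (fun x : ℝ => x ^ (2 * n)) (μ f) := by
    intro n
    refine ⟨(continuous_id.pow _).aestronglyMeasurable, ?_⟩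
    have hnn : ∀ x : ℝ, ‖x ^ (2 * n)‖ₑ = ENNReal.ofReal (x ^ (2 * n)) := by
      intro x
      rw [← ofReal_norm, Real.norm_eq_abs,
        abs_of_nonneg (pow_two_mul_nonneg x n)]
    rw [HasFiniteIntegral]
    simp only [hnn]
    have key : ∫⁻ x, ENNReal.ofReal (x ^ (2 * n)) ∂(μ f)
        ≤ ENNReal.ofReal ((‖A ^ n‖ * ‖f‖) ^ 2) := by
      set F : ℕ → ℝ → ENNReal := fun M =>
        (Set.Icc (-(M : ℝ)) M).indicator (fun x => ENNReal.ofReal (x ^ (2 * n))) with hF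
      have hmono : Monotone F := by
        intro a b hab
        apply Set.indicator_le_indicator_of_subset
          (Set.Icc_subset_Icc (by exact_mod_cast neg_le_neg (Nat.cast_le.mpr hab))
            (by exact_mod_cast hab)) (fun _ => zero_le)
      have hcover : ∀ x : ℝ, (⨆ M : ℕ, F M x) = ENNReal.ofReal (x ^ (2 * n)) := by
        intro x
        apply le_antisymm
        · exact iSup_le fun M => Set.indicator_le_self _ _ x
        · obtain ⟨M, hM⟩ := exists_nat_ge |x|
          have hmem : x ∈ Set.Icc (-(M : ℝ)) M :=
            ⟨neg_le_of_abs_le hM, le_of_abs_le hM⟩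
          refine le_iSup_of_le M ?_
          simp only [hF, Set.indicator_of_mem hmem]
          exact le_rfl
      have hFmeas : ∀ M, Measurable (F M) :=
        fun M => (ENNReal.measurable_ofReal.comp (measurable_id.pow_const _)).indicator
          measurableSet_Icc
      calc ∫⁻ x, ENNReal.ofReal (x ^ (2 * n)) ∂(μ f)
          = ∫⁻ x, ⨆ M : ℕ, F M x ∂(μ f) := by
            refine lintegral_congr fun x => (hcover x).symm
        _ = ⨆ M : ℕ, ∫⁻ x, F M x ∂(μ f) := lintegral_iSup hFmeas hmono
        _ ≤ ENNReal.ofReal ((‖A ^ n‖ * ‖f‖) ^ 2) := by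
            refine iSup_le fun M => ?_
            simp only [hF]
            rw [lintegral_indicator measurableSet_Icc]
            exact hbound n M
    exact lt_of_le_of_lt key ENNReal.ofReal_lt_top
  constructor
  · -- Bernstein ⇒ in range of projection
    intro hb
    -- moment bound
    have hmoment_bound : ∀ n : ℕ, ∫ x, x ^ (2 * n) ∂(μ f) ≤ (Ω ^ (2 * n) * ‖f‖) ^ 2 := by
      intro n
      rw [← hmom2 f n]
      exact pow_le_pow_left₀ (norm_nonneg _) (hb n) 2
    -- no mass above Ω²
    have hub : ∀ c : ℝ, Ω ^ 2 < c → (μ f) {x : ℝ | c ≤ |x|} = 0 := by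
      intro c hc
      have hc0 : 0 < c := lt_of_le_of_lt (sq_nonneg Ω) hc
      set S : Set ℝ := {x : ℝ | c ≤ |x|} with hSdef
      have hSmeas : MeasurableSet S :=
        measurableSet_le measurable_const measurable_id.abs
      have cheb : ∀ n : ℕ, c ^ (2 * n) * ((μ f) S).toReal ≤ (Ω ^ (2 * n) * ‖f‖) ^ 2 := by
        intro n
        have h1 : c ^ (2 * n) * ((μ f) S).toReal ≤ ∫ x in S, x ^ (2 * n) ∂(μ f) := by
          refine setIntegral_ge_of_const_le_real hSmeas (measure_ne_top _ _) ?_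
            (hint n).integrableOn
          intro x hx
          calc c ^ (2 * n) ≤ |x| ^ (2 * n) := pow_le_pow_left₀ hc0.le hx _
            _ = x ^ (2 * n) := by
                rw [← abs_pow, abs_of_nonneg (pow_two_mul_nonneg x n)]
        have h2 : ∫ x in S, x ^ (2 * n) ∂(μ f) ≤ ∫ x, x ^ (2 * n) ∂(μ f) :=
          setIntegral_le_integral (hint n)
            (Filter.Eventually.of_forall fun x => pow_two_mul_nonneg x n)
        exact le_trans h1 (le_trans h2 (hmoment_bound n))
      set m : ℝ := ((μ f) S).toReal with hm
      set r : ℝ := Ω ^ 4 / c ^ 2 with hr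
      have hr0 : 0 ≤ r := by positivity
      have hr1 : r < 1 := by
        rw [hr, div_lt_one (by positivity)]
        calc Ω ^ 4 = (Ω ^ 2) ^ 2 := by ring
          _ < c ^ 2 := by nlinarith [sq_nonneg Ω]
      have hstep : ∀ n : ℕ, m ≤ r ^ n * ‖f‖ ^ 2 := by
        intro n
        have := cheb n
        have hcp : 0 < c ^ (2 * n) := pow_pos hc0 _
        rw [hr]
        have he : (Ω ^ 4 / c ^ 2) ^ n * ‖f‖ ^ 2 = ((Ω ^ (2 * n) * ‖f‖) ^ 2) / c ^ (2 * n) := by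
          rw [div_pow, ← pow_mul, ← pow_mul]
          field_simp
          ring
        rw [he, le_div_iff₀ hcp]
        linarith [this]
      have htend : Filter.Tendsto (fun n : ℕ => r ^ n * ‖f‖ ^ 2) Filter.atTop (nhds 0) := by
        have := (tendsto_pow_atTop_nhds_zero_of_lt_one hr0 hr1).mul_const (‖f‖ ^ 2)
        simpa using this
      have hm0 : m ≤ 0 := ge_of_tendsto htend (Filter.Eventually.of_forall hstep)
      have : m = 0 := le_antisymm hm0 ENNReal.toReal_nonneg
      exact ((ENNReal.toReal_eq_zero_iff _).mp this).resolve_right (measure_ne_top _ _)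
    -- no mass above Ω² in absolute value
    have hub' : (μ f) {x : ℝ | Ω ^ 2 < |x|} = 0 := by
      have hsub : {x : ℝ | Ω ^ 2 < |x|} ⊆
          ⋃ n : ℕ, {x : ℝ | Ω ^ 2 + 1 / ((n : ℝ) + 1) ≤ |x|} := by
        intro x hx
        have hd : 0 < |x| - Ω ^ 2 := by simpa [sub_pos] using hx
        obtain ⟨n, hn⟩ := exists_nat_ge (1 / (|x| - Ω ^ 2))
        refine Set.mem_iUnion.mpr ⟨n, ?_⟩
        have h1 : 1 / (|x| - Ω ^ 2) ≤ (n : ℝ) + 1 := by linarith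
        have h2 : 1 / ((n : ℝ) + 1) ≤ |x| - Ω ^ 2 := by
          rw [div_le_iff₀ (by positivity)]
          rw [div_le_iff₀ hd] at h1
          linarith
        show Ω ^ 2 + 1 / ((n : ℝ) + 1) ≤ |x|
        linarith
      refine measure_mono_null hsub (measure_iUnion_null fun n => ?_)
      refine hub _ (lt_add_of_pos_right _ (by positivity))
    -- no mass below 0
    have hneg : (μ f) {x : ℝ | x < 0} = 0 := by
      have hsub1 : ∀ M : ℕ, (μ f) (Set.Icc (-(M : ℝ) - 1) (-(1 / ((M : ℝ) + 1)))) = 0 := by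
        intro M
        set δ : ℝ := 1 / ((M : ℝ) + 1) with hδdef
        have hδ : 0 < δ := by positivity
        set s : Set ℝ := Set.Icc (-(M : ℝ) - 1) (-δ) with hsdef
        have hsmeas : MeasurableSet s := measurableSet_Icc
        have hrs := hrestrict s hsmeas
        set g : H := P s f with hg
        haveI := hfin g
        have h0 : 0 ≤ (inner (𝕜 := ℂ) (A g) g).re := hpos g
        have h1 : (inner (𝕜 := ℂ) (A g) g).re = ∫ x, x ∂(μ g) := by
          have := hμm g 1
          simpa [pow_one] using this
        have hgint : Integrable (fun x : ℝ => x) (μ g) := by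
          rw [hrs]
          refine ⟨measurable_id.aestronglyMeasurable, ?_⟩
          apply HasFiniteIntegral.of_bounded (C := (M : ℝ) + 1)
          filter_upwards [ae_restrict_mem hsmeas] with x hx
          rw [Real.norm_eq_abs, abs_le]
          constructor
          · linarith [hx.1]
          · have : x ≤ -δ := hx.2
            linarith
        have h2 : ∫ x, x ∂(μ g) ≤ -δ * ((μ f) s).toReal := by
          rw [hrs]
          have hmono : ∫ x in s, x ∂(μ f) ≤ ∫ _x in s, (-δ) ∂(μ f) := by
            refine setIntegral_mono_on ?_ ((integrableOn_const_iff).mpr (Or.inr ?_))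
              hsmeas (fun x hx => hx.2)
            · show Integrable (fun x : ℝ => x) ((μ f).restrict s)
              rw [← hrs]; exact hgint
            · exact (measure_lt_top _ _)
          rw [setIntegral_const] at hmono
          calc ∫ x in s, x ∂(μ f) ≤ ((μ f) s).toReal • (-δ) := hmono
            _ = -δ * ((μ f) s).toReal := by rw [smul_eq_mul]; ring
        have h3 : ((μ f) s).toReal ≤ 0 := by nlinarith [h0, h1.trans_le h2]
        have : ((μ f) s).toReal = 0 := le_antisymm h3 ENNReal.toReal_nonneg
        exact ((ENNReal.toReal_eq_zero_iff _).mp this).resolve_right (measure_ne_top _ _)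
      have hsub : {x : ℝ | x < 0} ⊆
          ⋃ M : ℕ, Set.Icc (-(M : ℝ) - 1) (-(1 / ((M : ℝ) + 1))) := by
        intro x hx
        have hx0 : 0 < -x := neg_pos.mpr hx
        obtain ⟨M, hM⟩ := exists_nat_ge (max (-x) (1 / (-x)))
        refine Set.mem_iUnion.mpr ⟨M, ?_, ?_⟩
        · have : -x ≤ (M : ℝ) := le_trans (le_max_left _ _) hM
          linarith
        · have h1 : 1 / (-x) ≤ (M : ℝ) + 1 := by
            linarith [le_trans (le_max_right (-x) (1 / (-x))) hM]
          have h2 : 1 / ((M : ℝ) + 1) ≤ -x := by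
            rw [div_le_iff₀ (by positivity)]
            rw [div_le_iff₀ hx0] at h1
            linarith
          linarith
      exact measure_mono_null hsub (measure_iUnion_null hsub1)
    -- the complement of I is null
    have hcompl : (μ f) Iᶜ = 0 := by
      refine measure_mono_null (t := {x : ℝ | x < 0} ∪ {x : ℝ | Ω ^ 2 < |x|}) ?_
        (measure_union_null hneg hub')
      intro x hx
      rw [hIdef] at hx
      simp only [Set.mem_compl_iff, Set.mem_Icc, not_and_or, not_le] at hx
      rcases hx with hx | hx
      · exact Or.inl hx
      · refine Or.inr ?_
        have : (0 : ℝ) ≤ x := le_trans (sq_nonneg Ω) hx.le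
        simpa [Set.mem_setOf_eq, abs_of_nonneg this] using hx
    -- conclude f = P I f
    have hQ : P I f = f := by
      have hfix2 : P I (P I f) = P I f := by rw [hPP, Set.inter_self]
      have hre : (RCLike.re (inner (𝕜 := ℂ) f (P I f)) : ℝ) = ‖P I f‖ ^ 2 := by
        have e : inner (𝕜 := ℂ) f (P I f) = inner (𝕜 := ℂ) (P I f) (P I f) := by
          rw [sa_inner' (hsa I) f (P I f), hfix2]
        rw [e]
        exact inner_self_eq_norm_sq _
      have expand : ‖f - P I f‖ ^ 2 = ‖f‖ ^ 2 - ‖P I f‖ ^ 2 := by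
        rw [@norm_sub_sq ℂ, hre]
        ring
      have hPIf : ‖P I f‖ ^ 2 = ((μ f) I).toReal := by
        rw [hμs f I hImeas, proj_re' (hsa I) (hid I) f]
      have hsum : ((μ f) I).toReal + ((μ f) Iᶜ).toReal = ((μ f) Set.univ).toReal := by
        rw [← ENNReal.toReal_add (measure_ne_top _ _) (measure_ne_top _ _),
          measure_add_measure_compl hImeas]
      have hz : ‖f - P I f‖ ^ 2 = 0 := by
        rw [expand, hPIf, ← htotal f]
        rw [hcompl] at hsum
        simp at hsum
        linarith
      have : f - P I f = 0 := by
        rw [← norm_eq_zero]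
        nlinarith [norm_nonneg (f - P I f)]
      exact (sub_eq_zero.mp this).symm
    exact ⟨f, hQ⟩
  · -- in range ⇒ Bernstein
    rintro ⟨g, hg⟩ n
    have hfix : P I f = f := by
      rw [← hg, hPP, Set.inter_self]
    have hcompl : (μ f) Iᶜ = 0 := by
      have h := hμs f Iᶜ hImeas.compl
      have hz : P Iᶜ f = 0 := by
        rw [← hfix, hPP, Set.compl_inter_self]
        exact hPempty f
      rw [hz] at h
      simp only [inner_zero_left, Complex.zero_re] at h
      exact ((ENNReal.toReal_eq_zero_iff _).mp h).resolve_right (measure_ne_top _ _)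
    have hae : ∀ᵐ x ∂(μ f), x ∈ I := by
      rw [ae_iff]
      convert hcompl using 2
      rfl
    have hintb : Integrable (fun x : ℝ => x ^ (2 * n)) (μ f) := hint n
    have hle : ∫ x, x ^ (2 * n) ∂(μ f) ≤ (Ω ^ 2) ^ (2 * n) * ‖f‖ ^ 2 := by
      calc ∫ x, x ^ (2 * n) ∂(μ f) ≤ ∫ _x, (Ω ^ 2) ^ (2 * n) ∂(μ f) := by
            refine integral_mono_ae hintb (integrable_const _) ?_
            filter_upwards [hae] with x hx
            calc x ^ (2 * n) = |x| ^ (2 * n) := by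
                  rw [abs_of_nonneg hx.1]
              _ ≤ (Ω ^ 2) ^ (2 * n) := pow_le_pow_left₀ (abs_nonneg _)
                  (by rw [abs_of_nonneg hx.1]; exact hx.2) _
        _ = (Ω ^ 2) ^ (2 * n) * ‖f‖ ^ 2 := by
            rw [integral_const, measureReal_def, htotal f, smul_eq_mul, mul_comm]
    have hsq : ‖(A ^ n) f‖ ^ 2 ≤ (Ω ^ (2 * n) * ‖f‖) ^ 2 := by
      rw [hmom2 f n]
      calc ∫ x, x ^ (2 * n) ∂(μ f) ≤ (Ω ^ 2) ^ (2 * n) * ‖f‖ ^ 2 := hle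
        _ = (Ω ^ (2 * n) * ‖f‖) ^ 2 := by
            rw [mul_pow, ← pow_mul, ← pow_mul, Nat.mul_comm 2 (2 * n), Nat.mul_comm (2 * n) 2]
    have h := Real.sqrt_le_sqrt hsq
    rwa [Real.sqrt_sq (norm_nonneg _), Real.sqrt_sq (by positivity)] at h
end

section
/- Let $A$ be a nonnegative self-adjoint operator on a Hilbert space $H$ and let $f$ be a nonzero vector in the range of $P([0, \Omega^2])$ but not in the range of $P([0, \sigma^2])$ for any $\sigma < \Omega$. Then $\lim_{k \to \infty} \|A^{k/2} f\|^{1/k} = \Omega$. -/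
open MeasureTheory

lemma norm_sq_eq_re_inner' {H : Type*} [NormedAddCommGroup H] [InnerProductSpace ℂ H]
    (x : H) : (inner (𝕜 := ℂ) x x).re = ‖x‖ ^ 2 := by
  have := inner_self_eq_norm_sq (𝕜 := ℂ) x
  simpa [RCLike.re_to_complex] using this

lemma re_inner_proj {H : Type*} [NormedAddCommGroup H] [InnerProductSpace ℂ H]
    [CompleteSpace H] (Q : H →L[ℂ] H) (hQ : IsSelfAdjoint Q) (hQi : IsIdempotentElem Q)
    (f : H) : (inner (𝕜 := ℂ) (Q f) f).re = ‖Q f‖ ^ 2 := by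
  have h1 : Q f = Q (Q f) := by
    conv_lhs => rw [← hQi]
    rfl
  have h3 : inner (𝕜 := ℂ) (Q f) f = inner (𝕜 := ℂ) (Q f) (Q f) := by
    conv_lhs => rw [h1]
    rw [← ContinuousLinearMap.adjoint_inner_left Q f (Q f), hQ.adjoint_eq]
  rw [h3]
  exact norm_sq_eq_re_inner' _

/-- If `f ≠ 0` lies in the range of `P([0, Ω²])` but not in the range of `P([0, σ²])`
for any `σ < Ω`, then `lim_{k→∞} ‖A^{k/2} f‖^{1/k} = Ω`, where `A^{1/2} = B` is the
nonnegative self-adjoint square root of `A`. -/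
theorem norm_pow_root_tendsto {H : Type*} [NormedAddCommGroup H]
    [InnerProductSpace ℂ H] [CompleteSpace H]
    (A B : H →L[ℂ] H) (P : Set ℝ → H →L[ℂ] H)
    (hA : IsSelfAdjoint A) (hpos : ∀ f : H, 0 ≤ (inner (𝕜 := ℂ) (A f) f).re)
    (hP : IsSpectralMeasureOf A P)
    (hB : IsSelfAdjoint B) (hBpos : ∀ f : H, 0 ≤ (inner (𝕜 := ℂ) (B f) f).re)
    (hBA : B ^ 2 = A)
    (Ω : ℝ) (hΩ : 0 < Ω) (f : H) (hf0 : f ≠ 0)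
    (hfΩ : P (Set.Icc 0 (Ω ^ 2)) f = f)
    (hmin : ∀ σ : ℝ, 0 ≤ σ → σ < Ω → P (Set.Icc 0 (σ ^ 2)) f ≠ f) :
    Filter.Tendsto (fun k : ℕ => ‖(B ^ k) f‖ ^ (1 / (k : ℝ)))
      Filter.atTop (nhds Ω) := by
  obtain ⟨hPsa, hPid, hPcomp, hPuniv, hPmeas⟩ := hP
  obtain ⟨μ, hfin, hμs, hμmom⟩ := hPmeas f
  have hμuniv : (μ Set.univ).toReal = ‖f‖ ^ 2 := by
    rw [hμs Set.univ MeasurableSet.univ, hPuniv]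
    exact norm_sq_eq_re_inner' f
  have hPempty : P ∅ f = 0 := by
    have h0 : (μ ∅).toReal = ‖P ∅ f‖ ^ 2 := by
      rw [hμs ∅ MeasurableSet.empty, re_inner_proj _ (hPsa _) (hPid _)]
    rw [measure_empty] at h0
    have h1 : ‖P ∅ f‖ ^ 2 = 0 := by simpa using h0.symm
    have h2 := pow_eq_zero_iff (n := 2) (by norm_num) |>.mp h1
    simpa [norm_eq_zero] using h2
  have hsupp : μ (Set.Icc 0 (Ω ^ 2))ᶜ = 0 := by
    have hPc : P (Set.Icc 0 (Ω ^ 2))ᶜ f = 0 := by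
      conv_lhs => rw [← hfΩ]
      have h := congrArg (fun T : H →L[ℂ] H => T f)
        (hPcomp (Set.Icc 0 (Ω ^ 2))ᶜ (Set.Icc 0 (Ω ^ 2)))
      simp only [ContinuousLinearMap.comp_apply] at h
      rw [h, Set.compl_inter_self, hPempty]
    have h0 : (μ (Set.Icc 0 (Ω ^ 2))ᶜ).toReal = 0 := by
      rw [hμs _ measurableSet_Icc.compl, hPc]
      simp
    exact (ENNReal.toReal_eq_zero_iff _).mp h0 |>.resolve_right (measure_ne_top μ _)
  have hae : ∀ᵐ x ∂μ, x ∈ Set.Icc (0:ℝ) (Ω ^ 2) := by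
    rw [MeasureTheory.ae_iff]
    have : {a : ℝ | ¬ a ∈ Set.Icc (0:ℝ) (Ω ^ 2)} = (Set.Icc (0:ℝ) (Ω ^ 2))ᶜ := rfl
    rw [this]; exact hsupp
  -- integrability of monomials
  have hInt : ∀ k : ℕ, Integrable (fun x : ℝ => x ^ k) μ := by
    intro k
    refine (integrable_const ((Ω ^ 2) ^ k)).mono'
      ((continuous_pow k).aestronglyMeasurable) ?_
    filter_upwards [hae] with x hx
    rw [Real.norm_eq_abs, abs_of_nonneg (pow_nonneg hx.1 k)]
    exact pow_le_pow_left₀ hx.1 hx.2 k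
  -- norm-square formula
  have hnormsq : ∀ k : ℕ, ‖(B ^ k) f‖ ^ 2 = ∫ x, x ^ k ∂μ := by
    intro k
    have hsa : IsSelfAdjoint (B ^ k) := hB.pow k
    have e2 : (B ^ k) ((B ^ k) f) = (A ^ k) f := by
      rw [← ContinuousLinearMap.mul_apply, ← pow_add, ← hBA, ← pow_mul, two_mul]
    have e1 := hsa.isSymmetric ((B ^ k) f) f
    simp only [ContinuousLinearMap.coe_coe] at e1
    rw [e2] at e1
    rw [← hμmom k, e1]
    exact (norm_sq_eq_re_inner' _).symm
  -- upper bound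
  have hupp : ∀ k : ℕ, (∫ x, x ^ k ∂μ) ≤ (Ω ^ 2) ^ k * ‖f‖ ^ 2 := by
    intro k
    have h1 : (∫ x, x ^ k ∂μ) ≤ ∫ _x, (Ω ^ 2) ^ k ∂μ := by
      refine integral_mono_ae (hInt k) (integrable_const _) ?_
      filter_upwards [hae] with x hx
      exact pow_le_pow_left₀ hx.1 hx.2 k
    rw [integral_const, smul_eq_mul, measureReal_def, hμuniv] at h1
    linarith
  -- norm upper bound
  have hC : (0:ℝ) < ‖f‖ := norm_pos_iff.mpr hf0
  have hub : ∀ k : ℕ, ‖(B ^ k) f‖ ≤ Ω ^ k * ‖f‖ := by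
    intro k
    have h2 : ‖(B ^ k) f‖ ^ 2 ≤ (Ω ^ k * ‖f‖) ^ 2 := by
      rw [hnormsq k, mul_pow, ← pow_mul, mul_comm k 2, pow_mul]
      exact hupp k
    exact (pow_le_pow_iff_left₀ (norm_nonneg _) (by positivity) (by norm_num)).mp h2
  -- lower bounds
  have lower : ∀ σ : ℝ, 0 ≤ σ → σ < Ω → ∃ d : ℝ, 0 < d ∧
      ∀ k : ℕ, σ ^ k * d ≤ ‖(B ^ k) f‖ := by
    intro σ hσ0 hσΩ
    set s : Set ℝ := Set.Icc 0 (σ ^ 2) with hs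
    have hms : MeasurableSet s := measurableSet_Icc
    have hμsv : (μ s).toReal = ‖P s f‖ ^ 2 := by
      rw [hμs s hms, re_inner_proj _ (hPsa _) (hPid _)]
    have hcompl : (μ sᶜ).toReal = ‖f‖ ^ 2 - ‖P s f‖ ^ 2 := by
      rw [measure_compl hms (measure_ne_top μ s),
        ENNReal.toReal_sub_of_le (measure_mono (Set.subset_univ s)) (measure_ne_top μ _),
        hμuniv, hμsv]
    have hdiff : ‖f - P s f‖ ^ 2 = ‖f‖ ^ 2 - ‖P s f‖ ^ 2 := by
      have hns := @norm_sub_sq ℂ _ _ _ _ f (P s f)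
      have hre : (RCLike.re (inner (𝕜 := ℂ) f (P s f)) : ℝ) = ‖P s f‖ ^ 2 := by
        rw [← inner_conj_symm]
        simp only [RCLike.re_to_complex, Complex.conj_re]
        exact re_inner_proj _ (hPsa _) (hPid _) f
      rw [hns, hre]; ring
    have hpos' : 0 < (μ sᶜ).toReal := by
      rw [hcompl, ← hdiff]
      have hne : f - P s f ≠ 0 := sub_ne_zero.mpr (Ne.symm (hmin σ hσ0 hσΩ))
      exact pow_pos (norm_pos_iff.mpr hne) 2
    refine ⟨Real.sqrt ((μ sᶜ).toReal), Real.sqrt_pos.mpr hpos', ?_⟩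
    intro k
    have hlowint : (σ ^ 2) ^ k * (μ sᶜ).toReal ≤ ∫ x, x ^ k ∂μ := by
      have h1 : (∫ x, sᶜ.indicator (fun _ => (σ ^ 2) ^ k) x ∂μ) ≤ ∫ x, x ^ k ∂μ := by
        refine integral_mono_ae ((integrable_const _).indicator hms.compl) (hInt k) ?_
        filter_upwards [hae] with x hx
        by_cases hxs : x ∈ sᶜ
        · rw [Set.indicator_of_mem hxs]
          have hxgt : σ ^ 2 < x := by
            by_contra hle
            exact hxs ⟨hx.1, le_of_not_gt hle⟩
          exact pow_le_pow_left₀ (sq_nonneg σ) hxgt.le k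
        · rw [Set.indicator_of_notMem hxs]
          exact pow_nonneg hx.1 k
      rwa [integral_indicator_const _ hms.compl, smul_eq_mul, mul_comm] at h1
    have hsq : (σ ^ k * Real.sqrt ((μ sᶜ).toReal)) ^ 2 ≤ ‖(B ^ k) f‖ ^ 2 := by
      rw [hnormsq k, mul_pow, Real.sq_sqrt hpos'.le, ← pow_mul, mul_comm k 2, pow_mul]
      exact hlowint
    exact (pow_le_pow_iff_left₀ (by positivity) (norm_nonneg _) (by norm_num)).mp hsq
  -- rpow convergence helper
  have haux : ∀ d : ℝ, 0 < d →
      Filter.Tendsto (fun k : ℕ => d ^ (1 / (k : ℝ))) Filter.atTop (nhds 1) := by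
    intro d hd
    have h := (Real.continuousAt_const_rpow (a := d) (b := 0) hd.ne').tendsto.comp
      tendsto_one_div_atTop_nhds_zero_nat
    simpa [Function.comp_def, Real.rpow_zero] using h
  -- rpow bounds
  have key_ub : ∀ k : ℕ, 1 ≤ k →
      ‖(B ^ k) f‖ ^ (1 / (k : ℝ)) ≤ Ω * ‖f‖ ^ (1 / (k : ℝ)) := by
    intro k hk
    have hk0 : (k : ℝ) ≠ 0 := Nat.cast_ne_zero.mpr (by omega)
    have h1 : ‖(B ^ k) f‖ ^ (1 / (k : ℝ)) ≤ (Ω ^ k * ‖f‖) ^ (1 / (k : ℝ)) :=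
      Real.rpow_le_rpow (norm_nonneg _) (hub k) (by positivity)
    have h2 : (Ω ^ k * ‖f‖) ^ (1 / (k : ℝ)) = Ω * ‖f‖ ^ (1 / (k : ℝ)) := by
      rw [Real.mul_rpow (by positivity) (norm_nonneg f), ← Real.rpow_natCast Ω k,
        ← Real.rpow_mul hΩ.le, mul_one_div_cancel hk0, Real.rpow_one]
    rw [h2] at h1; exact h1
  have key_lb : ∀ σ d : ℝ, 0 ≤ σ → 0 < d →
      (∀ k : ℕ, σ ^ k * d ≤ ‖(B ^ k) f‖) → ∀ k : ℕ, 1 ≤ k →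
      σ * d ^ (1 / (k : ℝ)) ≤ ‖(B ^ k) f‖ ^ (1 / (k : ℝ)) := by
    intro σ d hσ0 hd hbd k hk
    have hk0 : (k : ℝ) ≠ 0 := Nat.cast_ne_zero.mpr (by omega)
    have h1 : (σ ^ k * d) ^ (1 / (k : ℝ)) ≤ ‖(B ^ k) f‖ ^ (1 / (k : ℝ)) :=
      Real.rpow_le_rpow (by positivity) (hbd k) (by positivity)
    have h2 : (σ ^ k * d) ^ (1 / (k : ℝ)) = σ * d ^ (1 / (k : ℝ)) := by
      rw [Real.mul_rpow (by positivity) hd.le, ← Real.rpow_natCast σ k,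
        ← Real.rpow_mul hσ0, mul_one_div_cancel hk0, Real.rpow_one]
    rw [h2] at h1; exact h1
  -- final ε-argument
  rw [Metric.tendsto_nhds]
  intro ε hε
  set σ : ℝ := max (Ω - ε / 2) (Ω / 2) with hσdef
  have hσ0 : 0 ≤ σ := le_trans (by positivity) (le_max_right _ _)
  have hσΩ : σ < Ω := max_lt (by linarith) (by linarith)
  have hσε : Ω - ε < σ := lt_of_lt_of_le (by linarith) (le_max_left _ _)
  obtain ⟨d, hd, hbd⟩ := lower σ hσ0 hσΩ
  have T1 : Filter.Tendsto (fun k : ℕ => σ * d ^ (1 / (k : ℝ))) Filter.atTop (nhds σ) := by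
    have := (haux d hd).const_mul σ
    simpa using this
  have T2 : Filter.Tendsto (fun k : ℕ => Ω * ‖f‖ ^ (1 / (k : ℝ))) Filter.atTop (nhds Ω) := by
    have := (haux ‖f‖ hC).const_mul Ω
    simpa using this
  have E1 : ∀ᶠ k : ℕ in Filter.atTop, Ω - ε < σ * d ^ (1 / (k : ℝ)) :=
    T1.eventually (eventually_gt_nhds hσε)
  have E2 : ∀ᶠ k : ℕ in Filter.atTop, Ω * ‖f‖ ^ (1 / (k : ℝ)) < Ω + ε :=
    T2.eventually (eventually_lt_nhds (by linarith))
  filter_upwards [E1, E2, Filter.eventually_ge_atTop 1] with k h1 h2 hk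
  rw [Real.dist_eq, abs_lt]
  have hlo := key_lb σ d hσ0 hd hbd k hk
  have hhi := key_ub k hk
  constructor <;> linarith
end

section
/- Let $A$ and $L$ be commuting nonnegative self-adjoint operators on a Hilbert space $H$ with $\|A f\| \le B(\|f\| + \|L f\|)$ for all $f$ in a common core, for some constant $B > 0$. Then for every $k \in \mathbb{N}$ and every $f$ in the domain of all relevant powers, $\|A^k f\| \le (2B)^k \sum_{0 \le l \le k} \|L^l f\|$. -/
/-- Iteration of a one-step comparison between commuting nonnegative self-adjoint
operators: if `‖A f‖ ≤ B(‖f‖ + ‖L f‖)` for all `f`, then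
`‖A^k f‖ ≤ (2B)^k ∑_{0 ≤ l ≤ k} ‖L^l f‖`. -/
theorem iterate_comparison {H : Type*} [NormedAddCommGroup H] [InnerProductSpace ℂ H]
    [CompleteSpace H] (A L : H →L[ℂ] H)
    (hA : IsSelfAdjoint A) (hL : IsSelfAdjoint L)
    (hApos : ∀ f : H, 0 ≤ (inner (𝕜 := ℂ) (A f) f).re)
    (hLpos : ∀ f : H, 0 ≤ (inner (𝕜 := ℂ) (L f) f).re)
    (hcomm : Commute A L)
    (B : ℝ) (hB : 0 < B) (hAL : ∀ f : H, ‖A f‖ ≤ B * (‖f‖ + ‖L f‖))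
    (k : ℕ) (f : H) :
    ‖(A ^ k) f‖ ≤ (2 * B) ^ k * ∑ l ∈ Finset.range (k + 1), ‖(L ^ l) f‖ := by
  induction k generalizing f with
  | zero => simp
  | succ k ih =>
    have h1 : ‖(A ^ (k + 1)) f‖ = ‖(A ^ k) (A f)‖ := by
      rw [pow_succ]; rfl
    have hLA : ∀ l : ℕ, (L ^ l) (A f) = A ((L ^ l) f) := by
      intro l
      have := (hcomm.pow_right l).symm
      calc (L ^ l) (A f) = (L ^ l * A) f := rfl
        _ = (A * L ^ l) f := by rw [this]
        _ = A ((L ^ l) f) := rfl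
    have h2 : ∑ l ∈ Finset.range (k + 1), ‖(L ^ l) (A f)‖
        ≤ B * ∑ l ∈ Finset.range (k + 1), (‖(L ^ l) f‖ + ‖(L ^ (l + 1)) f‖) := by
      rw [Finset.mul_sum]
      refine Finset.sum_le_sum fun l _ => ?_
      rw [hLA l]
      have := hAL ((L ^ l) f)
      have hLl : L ((L ^ l) f) = (L ^ (l + 1)) f := by
        rw [pow_succ']; rfl
      rwa [hLl] at this
    have h3 : ∑ l ∈ Finset.range (k + 1), (‖(L ^ l) f‖ + ‖(L ^ (l + 1)) f‖)
        ≤ 2 * ∑ l ∈ Finset.range (k + 2), ‖(L ^ l) f‖ := by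
      rw [Finset.sum_add_distrib, two_mul]
      refine add_le_add ?_ ?_
      · exact Finset.sum_le_sum_of_subset_of_nonneg
          (Finset.range_subset_range.2 (Nat.le_succ _)) (fun _ _ _ => norm_nonneg _)
      · rw [show k + 2 = (k + 1) + 1 from rfl,
          Finset.sum_range_succ' (fun l => ‖(L ^ l) f‖) (k + 1)]
        exact le_add_of_nonneg_right (norm_nonneg _)
    have h4 := ih (A f)
    have hpow : (0:ℝ) ≤ (2 * B) ^ k := by positivity
    calc ‖(A ^ (k + 1)) f‖ = ‖(A ^ k) (A f)‖ := h1
      _ ≤ (2 * B) ^ k * ∑ l ∈ Finset.range (k + 1), ‖(L ^ l) (A f)‖ := h4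
      _ ≤ (2 * B) ^ k * (B * (2 * ∑ l ∈ Finset.range (k + 2), ‖(L ^ l) f‖)) := by
          refine mul_le_mul_of_nonneg_left ?_ hpow
          exact h2.trans (by nlinarith [h3])
      _ = (2 * B) ^ (k + 1) * ∑ l ∈ Finset.range (k + 2), ‖(L ^ l) f‖ := by ring
end

section
/- Let $E$ be a Banach space, $V$ the generator of a strongly continuous isometry group $e^{tV}$ on $E$, and $f \in \bigcap_k \mathrm{Dom}(V^k)$ with $\|V^k f\| \le \omega^k \|f\|$ for all $k$. Then for every $h \in E^*$, the function $t \mapsto h(e^{tV} f)$ extends to an entire function of exponential type at most $\omega$, bounded on $\mathbb{R}$ by $\|h\| \|f\|$, and its $k$-th derivative at $0$ equals $h(V^k f)$. -/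
open scoped Nat

private lemma orbit_hasDerivAt {E : Type*} [NormedAddCommGroup E] [NormedSpace ℂ E]
    (U : ℝ → E →L[ℂ] E) (V : E →ₗ[ℂ] E)
    (hUadd : ∀ s t : ℝ, U (s + t) = (U s).comp (U t))
    (hgen : ∀ x : E, HasDerivAt (fun t : ℝ => U t x) (V x) 0)
    (x : E) (t : ℝ) : HasDerivAt (fun s : ℝ => U s x) (U t (V x)) t := by
  have h1 : HasDerivAt (fun s : ℝ => U (s - t) x) (V x) t := by
    simpa [Function.comp_def] using
      HasDerivAt.scomp_of_eq t (hgen x) ((hasDerivAt_id t).sub_const t) (by simp)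
  have h2 := ((U t).restrictScalars ℝ).hasFDerivAt.comp_hasDerivAt t h1
  have heq : (fun s : ℝ => U s x) = (((U t).restrictScalars ℝ) : E → E) ∘
      (fun s : ℝ => U (s - t) x) := by
    funext s
    have hts : t + (s - t) = s := by ring
    simp only [Function.comp_apply, ContinuousLinearMap.coe_restrictScalars',
      ← ContinuousLinearMap.comp_apply, ← hUadd, hts]
  rw [heq]
  simpa using h2

private lemma orbit_ibp {E : Type*} [NormedAddCommGroup E] [NormedSpace ℂ E]
    [CompleteSpace E] (U : ℝ → E →L[ℂ] E) (V : E →ₗ[ℂ] E)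
    (hU0 : U 0 = 1) (hUadd : ∀ s t : ℝ, U (s + t) = (U s).comp (U t))
    (hgen : ∀ x : E, HasDerivAt (fun t : ℝ => U t x) (V x) 0)
    (hcont : ∀ x : E, Continuous fun t : ℝ => U t x)
    (x : E) (t : ℝ) (n : ℕ) :
    (∫ s in (0:ℝ)..t, ((t - s) ^ n / n !) • U s x)
      = (t ^ (n+1) / (n+1)!) • x
        + ∫ s in (0:ℝ)..t, ((t - s) ^ (n+1) / (n+1)!) • U s (V x) := by
  have hfac : ((n+1)! : ℝ) = ((n:ℝ)+1) * n ! := by exact_mod_cast Nat.factorial_succ n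
  have hg : ∀ s : ℝ, HasDerivAt (fun s : ℝ => -((t - s) ^ (n+1) / (n+1)!))
      ((t - s) ^ n / n !) s := by
    intro s
    have h1 : HasDerivAt (fun s : ℝ => (t - s)) (-1) s := by
      simpa using (hasDerivAt_id s).const_sub t
    have h3 := ((h1.pow (n+1)).div_const ((n+1)! : ℝ)).neg
    convert h3 using 1
    have hne : (n ! : ℝ) ≠ 0 := by positivity
    have hne2 : ((n:ℝ) + 1) ≠ 0 := by positivity
    · rfl
    · rfl
    · rfl
    rw [hfac, Nat.add_sub_cancel]
    push_cast
    rw [neg_div', eq_div_iff (by positivity), div_mul_eq_mul_div, div_eq_iff (by positivity)]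
    ring
  have hG : ∀ s : ℝ, HasDerivAt (fun s : ℝ => (-((t - s) ^ (n+1) / (n+1)!)) • U s x)
      ((-((t - s) ^ (n+1) / (n+1)!)) • U s (V x) + ((t - s) ^ n / n !) • U s x) s :=
    fun s => (hg s).smul (orbit_hasDerivAt U V hUadd hgen x s)
  have cont1 : Continuous fun s : ℝ => ((t - s) ^ n / n !) • U s x :=
    (((continuous_const.sub continuous_id).pow n).div_const _).smul (hcont x)
  have cont2 : Continuous fun s : ℝ => (-((t - s) ^ (n+1) / (n+1)!)) • U s (V x) :=
    ((((continuous_const.sub continuous_id).pow (n+1)).div_const _).neg).smul (hcont (V x))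
  have hFTC := intervalIntegral.integral_eq_sub_of_hasDerivAt (a := 0) (b := t)
      (fun s _ => hG s) ((cont2.add cont1).intervalIntegrable 0 t)
  rw [intervalIntegral.integral_add (cont2.intervalIntegrable 0 t)
    (cont1.intervalIntegrable 0 t)] at hFTC
  have hend : (-((t - t) ^ (n+1) / ((n+1)! : ℝ))) • U t x = 0 := by
    simp
  have hstart : (-((t - 0) ^ (n+1) / ((n+1)! : ℝ))) • U 0 x
      = -((t ^ (n+1) / (n+1)!) • x) := by
    rw [hU0]
    simp [neg_smul]
  rw [hend, hstart, zero_sub, neg_neg] at hFTC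
  have hB : (∫ s in (0:ℝ)..t, (-((t - s) ^ (n+1) / ((n+1)! : ℝ))) • U s (V x))
      = -∫ s in (0:ℝ)..t, ((t - s) ^ (n+1) / ((n+1)! : ℝ)) • U s (V x) := by
    rw [← intervalIntegral.integral_neg]
    simp [neg_smul]
  rw [hB] at hFTC
  rw [← hFTC]
  abel

private lemma orbit_taylor {E : Type*} [NormedAddCommGroup E] [NormedSpace ℂ E]
    [CompleteSpace E] (U : ℝ → E →L[ℂ] E) (V : E →ₗ[ℂ] E)
    (hU0 : U 0 = 1) (hUadd : ∀ s t : ℝ, U (s + t) = (U s).comp (U t))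
    (hgen : ∀ x : E, HasDerivAt (fun t : ℝ => U t x) (V x) 0)
    (hcont : ∀ x : E, Continuous fun t : ℝ => U t x)
    (f : E) (t : ℝ) (n : ℕ) :
    U t f = (∑ r ∈ Finset.range (n+1), (t ^ r / r !) • (V ^ r) f)
      + ∫ s in (0:ℝ)..t, ((t - s) ^ n / n !) • U s ((V ^ (n+1)) f) := by
  induction n with
  | zero =>
      have hbase := intervalIntegral.integral_eq_sub_of_hasDerivAt (a := 0) (b := t)
        (fun s _ => orbit_hasDerivAt U V hUadd hgen f s)
        ((hcont (V f)).intervalIntegrable 0 t)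
      simp only [hU0, ContinuousLinearMap.one_apply] at hbase
      simp only [zero_add, pow_one, pow_zero, Nat.factorial_zero, Nat.cast_one, div_one,
        one_smul, Finset.range_one, Finset.sum_singleton]
      rw [hbase]
      simp only [Module.End.one_apply]
      abel
  | succ n ih =>
      have hpow : V ((V ^ (n + 1)) f) = (V ^ (n + 1 + 1)) f := by
        rw [pow_succ' V (n + 1)]; rfl
      rw [Finset.sum_range_succ, ih,
        orbit_ibp U V hU0 hUadd hgen hcont ((V ^ (n+1)) f) t n, hpow]
      abel

/-- Forward direction of Theorem 2.1: if `V` generates a strongly continuous isometry group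
`e^{tV}` on a Banach space `E` and `‖V^k f‖ ≤ ω^k ‖f‖` for all `k`, then for every
functional `h` the function `t ↦ h(e^{tV} f)` extends to the entire function
`F(z) = ∑ z^r h(V^r f)/r!` of exponential type at most `ω`, bounded on `ℝ` by `‖h‖ ‖f‖`,
with `F^{(k)}(0) = h(V^k f)`. -/
theorem group_orbit_entire (E : Type*) [NormedAddCommGroup E] [NormedSpace ℂ E]
    [CompleteSpace E] (U : ℝ → E →L[ℂ] E) (V : E →ₗ[ℂ] E)
    (hU0 : U 0 = 1) (hUadd : ∀ s t : ℝ, U (s + t) = (U s).comp (U t))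
    (hiso : ∀ (t : ℝ) (x : E), ‖U t x‖ = ‖x‖)
    (hcont : ∀ x : E, Continuous fun t : ℝ => U t x)
    (hgen : ∀ x : E, HasDerivAt (fun t : ℝ => U t x) (V x) 0)
    (f : E) (ω : ℝ) (hω : 0 < ω) (hf : ∀ k : ℕ, ‖(V ^ k) f‖ ≤ ω ^ k * ‖f‖)
    (h : E →L[ℂ] ℂ) :
    Differentiable ℂ (fun z : ℂ => ∑' r : ℕ, (z ^ r / (r.factorial : ℂ)) * h ((V ^ r) f)) ∧
    (∀ z : ℂ, ‖∑' r : ℕ, (z ^ r / (r.factorial : ℂ)) * h ((V ^ r) f)‖ ≤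
      ‖h‖ * ‖f‖ * Real.exp (ω * ‖z‖)) ∧
    (∀ t : ℝ, (∑' r : ℕ, ((t : ℂ) ^ r / (r.factorial : ℂ)) * h ((V ^ r) f)) = h (U t f)) ∧
    (∀ t : ℝ, ‖∑' r : ℕ, ((t : ℂ) ^ r / (r.factorial : ℂ)) * h ((V ^ r) f)‖ ≤ ‖h‖ * ‖f‖) ∧
    (∀ k : ℕ,
      iteratedDeriv k (fun z : ℂ => ∑' r : ℕ, (z ^ r / (r.factorial : ℂ)) * h ((V ^ r) f)) 0 =
        h ((V ^ k) f)) := by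
  classical
  set c : ℕ → ℂ := fun r => h ((V ^ r) f) / (r.factorial : ℂ) with hc
  have hnorm : ∀ r : ℕ, ‖h ((V ^ r) f)‖ ≤ ‖h‖ * ‖f‖ * ω ^ r := by
    intro r
    calc ‖h ((V ^ r) f)‖ ≤ ‖h‖ * ‖(V ^ r) f‖ := h.le_opNorm _
    _ ≤ ‖h‖ * (ω ^ r * ‖f‖) := mul_le_mul_of_nonneg_left (hf r) (norm_nonneg h)
    _ = ‖h‖ * ‖f‖ * ω ^ r := by ring
  have hterm : ∀ (z : ℂ) (r : ℕ), ‖(z ^ r / (r.factorial : ℂ)) * h ((V ^ r) f)‖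
      ≤ ‖h‖ * ‖f‖ * ((ω * ‖z‖) ^ r / r !) := by
    intro z r
    have h1 : ‖(r.factorial : ℂ)‖ = (r.factorial : ℝ) := by
      simp
    rw [norm_mul, norm_div, norm_pow, h1]
    calc ‖z‖ ^ r / r ! * ‖h ((V ^ r) f)‖ ≤ ‖z‖ ^ r / r ! * (‖h‖ * ‖f‖ * ω ^ r) := by
          have hd : (0:ℝ) ≤ ‖z‖ ^ r / r ! := by positivity
          exact mul_le_mul_of_nonneg_left (hnorm r) hd
    _ = ‖h‖ * ‖f‖ * ((ω * ‖z‖) ^ r / r !) := by rw [mul_pow]; ring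
  have hbnd_summable : ∀ R : ℝ, Summable (fun r : ℕ => ‖h‖ * ‖f‖ * ((ω * R) ^ r / r !)) :=
    fun R => (Real.summable_pow_div_factorial (ω * R)).mul_left _
  have hS : ∀ z : ℂ, Summable (fun r : ℕ => ‖(z ^ r / (r.factorial : ℂ)) * h ((V ^ r) f)‖) :=
    fun z => Summable.of_nonneg_of_le (fun r => norm_nonneg _) (hterm z) (hbnd_summable ‖z‖)
  have hSsum : ∀ z : ℂ, Summable (fun r : ℕ => (z ^ r / (r.factorial : ℂ)) * h ((V ^ r) f)) :=
    fun z => (hS z).of_norm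
  set p : FormalMultilinearSeries ℂ ℂ ℂ := FormalMultilinearSeries.ofScalars ℂ c with hp
  have hpn : ∀ n : ℕ, ‖p n‖ = ‖c n‖ := fun n => FormalMultilinearSeries.ofScalars_norm ℂ c n
  have hcn : ∀ n : ℕ, ‖c n‖ ≤ ‖h‖ * ‖f‖ * ω ^ n / n ! := by
    intro n
    rw [hc]
    simp only [norm_div, Complex.norm_natCast]
    gcongr
    exact hnorm n
  have hrad : p.radius = ⊤ := by
    apply FormalMultilinearSeries.radius_eq_top_of_summable_norm
    intro r
    refine Summable.of_nonneg_of_le (fun n => by positivity) (fun n => ?_)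
      ((Real.summable_pow_div_factorial (ω * r)).mul_left (‖h‖ * ‖f‖))
    calc ‖p n‖ * (r:ℝ) ^ n = ‖c n‖ * (r:ℝ) ^ n := by rw [hpn]
    _ ≤ (‖h‖ * ‖f‖ * ω ^ n / n !) * (r:ℝ) ^ n := by
        exact mul_le_mul_of_nonneg_right (hcn n) (by positivity)
    _ = ‖h‖ * ‖f‖ * ((ω * r) ^ n / n !) := by rw [mul_pow]; ring
  have hFsum : (fun z : ℂ => ∑' r : ℕ, (z ^ r / (r.factorial : ℂ)) * h ((V ^ r) f)) = p.sum := by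
    funext z
    refine tsum_congr fun r => ?_
    rw [hp, FormalMultilinearSeries.ofScalars_apply_eq, hc, smul_eq_mul]
    ring
  have hball : HasFPowerSeriesOnBall p.sum p 0 ⊤ := by
    have hb := p.hasFPowerSeriesOnBall (by rw [hrad]; exact ENNReal.zero_lt_top)
    rwa [hrad] at hb
  have hballF : HasFPowerSeriesOnBall
      (fun z : ℂ => ∑' r : ℕ, (z ^ r / (r.factorial : ℂ)) * h ((V ^ r) f)) p 0 ⊤ := by
    rw [hFsum]; exact hball
  have key : ∀ t : ℝ, (∑' r : ℕ, ((t : ℂ) ^ r / (r.factorial : ℂ)) * h ((V ^ r) f))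
      = h (U t f) := by
    intro t
    have hconv : Filter.Tendsto
        (fun n : ℕ => ∑ r ∈ Finset.range (n+1), (t ^ r / r !) • (V ^ r) f)
        Filter.atTop (nhds (U t f)) := by
      rw [tendsto_iff_norm_sub_tendsto_zero]
      have hb : ∀ n : ℕ, ‖(∑ r ∈ Finset.range (n+1), (t ^ r / r !) • (V ^ r) f) - U t f‖
          ≤ |t| ^ n / n ! * (ω ^ (n+1) * ‖f‖) * |t| := by
        intro n
        have htay := orbit_taylor U V hU0 hUadd hgen hcont f t n
        have heq : (∑ r ∈ Finset.range (n+1), (t ^ r / r !) • (V ^ r) f) - U t f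
            = -(∫ s in (0:ℝ)..t, ((t - s) ^ n / n !) • U s ((V ^ (n+1)) f)) := by
          rw [htay]; abel
        rw [heq, norm_neg]
        have hC : ∀ s ∈ Set.uIoc (0:ℝ) t,
            ‖((t - s) ^ n / (n ! : ℝ)) • U s ((V ^ (n+1)) f)‖
              ≤ |t| ^ n / n ! * (ω ^ (n+1) * ‖f‖) := by
          intro s hs
          have hts : |t - s| ≤ |t| := by
            rcases le_total 0 t with ht | ht
            · rw [Set.uIoc_of_le ht] at hs
              rw [abs_of_nonneg (by linarith [hs.1, hs.2]), abs_of_nonneg ht]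
              linarith [hs.1]
            · rw [Set.uIoc_of_ge ht] at hs
              rw [abs_of_nonpos (by linarith [hs.1]), abs_of_nonpos ht]
              linarith [hs.2]
          have h2 : ‖(t - s) ^ n / (n ! : ℝ)‖ = |t - s| ^ n / n ! := by
            rw [Real.norm_eq_abs, abs_div, abs_pow, Nat.abs_cast]
          rw [norm_smul, hiso, h2]
          have h3 : |t - s| ^ n / (n ! : ℝ) ≤ |t| ^ n / n ! := by
            gcongr
          exact mul_le_mul h3 (hf (n+1)) (norm_nonneg _) (by positivity)
        have hle := intervalIntegral.norm_integral_le_of_norm_le_const hC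
        rw [sub_zero] at hle
        exact hle
      have h0 : Filter.Tendsto (fun n : ℕ => |t| ^ n / n ! * (ω ^ (n+1) * ‖f‖) * |t|)
          Filter.atTop (nhds 0) := by
        have hre : (fun n : ℕ => |t| ^ n / n ! * (ω ^ (n+1) * ‖f‖) * |t|)
            = fun n : ℕ => (ω * ‖f‖ * |t|) * ((ω * |t|) ^ n / n !) := by
          funext n; rw [mul_pow, pow_succ]; ring
        rw [hre]
        have ht0 := (Real.summable_pow_div_factorial (ω * |t|)).tendsto_atTop_zero
        simpa using ht0.const_mul (ω * ‖f‖ * |t|)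
      exact squeeze_zero (fun n => norm_nonneg _) hb h0
    have hmap : ∀ n : ℕ, h (∑ r ∈ Finset.range (n+1), (t ^ r / r !) • (V ^ r) f)
        = ∑ r ∈ Finset.range (n+1), ((t:ℂ) ^ r / (r.factorial : ℂ)) * h ((V ^ r) f) := by
      intro n
      rw [map_sum]
      refine Finset.sum_congr rfl fun r _ => ?_
      rw [ContinuousLinearMap.map_smul_of_tower, Complex.real_smul]
      push_cast
      ring
    have htend2 : Filter.Tendsto
        (fun n : ℕ => ∑ r ∈ Finset.range (n+1), ((t:ℂ) ^ r / (r.factorial : ℂ)) * h ((V ^ r) f))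
        Filter.atTop (nhds (h (U t f))) := by
      have hcomp := (h.continuous.tendsto (U t f)).comp hconv
      refine hcomp.congr fun n => ?_
      exact hmap n
    have htend1 : Filter.Tendsto
        (fun n : ℕ => ∑ r ∈ Finset.range (n+1), ((t:ℂ) ^ r / (r.factorial : ℂ)) * h ((V ^ r) f))
        Filter.atTop
        (nhds (∑' r : ℕ, ((t : ℂ) ^ r / (r.factorial : ℂ)) * h ((V ^ r) f))) := by
      have hsn := (hSsum ((t:ℂ))).hasSum.tendsto_sum_nat
      exact hsn.comp (Filter.tendsto_add_atTop_nat 1)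
    exact tendsto_nhds_unique htend1 htend2
  refine ⟨?_, ?_, key, ?_, ?_⟩
  · intro z
    have hz : z ∈ Metric.eball (0:ℂ) ⊤ := by
      simp [Metric.mem_eball, edist_lt_top]
    exact (hballF.analyticAt_of_mem hz).differentiableAt
  · intro z
    have h1 := norm_tsum_le_tsum_norm (hS z)
    have h2 := Summable.tsum_le_tsum (hterm z) (hS z) (hbnd_summable ‖z‖)
    have h3 : (∑' r : ℕ, ‖h‖ * ‖f‖ * ((ω * ‖z‖) ^ r / r !))
        = ‖h‖ * ‖f‖ * Real.exp (ω * ‖z‖) := by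
      rw [tsum_mul_left]
      congr 1
      rw [Real.exp_eq_exp_ℝ, NormedSpace.exp_eq_tsum_div]
    linarith
  · intro t
    rw [key t]
    calc ‖h (U t f)‖ ≤ ‖h‖ * ‖U t f‖ := h.le_opNorm _
    _ = ‖h‖ * ‖f‖ := by rw [hiso]
  · intro k
    have h1 := hballF.factorial_smul (y := (1:ℂ)) k
    have h2 : p k (fun _ => (1:ℂ)) = c k := by
      rw [hp, FormalMultilinearSeries.ofScalars_apply_eq]
      simp
    rw [iteratedDeriv_eq_iteratedFDeriv, ← h1, h2, hc, nsmul_eq_mul]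
    have hke : ((k ! : ℂ)) ≠ 0 := Nat.cast_ne_zero.mpr k.factorial_ne_zero
    field_simp
end
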